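/- Let σ(x) = 1/(1 + e^{−x}) be the logistic sigmoid. Let q₁ ≥ 0 and define recursively q_{ℓ+1} = ∫_ℝ σ(x)² dN(0, q_ℓ)(x) and d_{ℓ+1} = ∫_ℝ σ′(x)² dN(0, q_ℓ)(x), and let Θ₁ = q₁ and Θ_{ℓ+1} = Θ_ℓ · d_{ℓ+1} + q_{ℓ+1}. Then for every L ≥ 2, Θ_L ≥ 1/4. (This is the paper's Lemma B.1: the diagonal NTK value Θ_∞^{(L)}(x, x) of a depth-L sigmoid network is bounded below by 1/4.) -/

import Mathlib

open MeasureTheory ProbabilityTheory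

lemma sig_cont : Continuous fun x : ℝ => (1 / (1 + Real.exp (-x))) ^ 2 := by
  apply Continuous.pow
  exact continuous_const.div (by continuity) (fun x => by positivity)

lemma sig_int (v : NNReal) :
    Integrable (fun x : ℝ => (1 / (1 + Real.exp (-x))) ^ 2) (gaussianReal 0 v) := by
  refine (integrable_const (1 : ℝ)).mono' sig_cont.aestronglyMeasurable ?_
  filter_upwards with x
  have h : 1 ≤ 1 + Real.exp (-x) := by nlinarith [Real.exp_pos (-x)]
  rw [Real.norm_eq_abs, abs_of_nonneg (by positivity)]
  have : 1 / (1 + Real.exp (-x)) ≤ 1 := by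
    rw [div_le_one (by positivity)]; exact h
  nlinarith [show (0:ℝ) ≤ 1 / (1 + Real.exp (-x)) by positivity]

lemma gauss_neg (v : NNReal) :
    (gaussianReal 0 v).map (fun x : ℝ => -x) = gaussianReal 0 v := by
  have h := gaussianReal_map_const_mul (μ := 0) (v := v) (-1)
  simp only [neg_one_mul] at h
  rw [h]
  congr 1
  · ring
  · ext; simp

lemma key (v : NNReal) :
    (1 / 4 : ℝ) ≤ ∫ x, (1 / (1 + Real.exp (-x))) ^ 2 ∂(gaussianReal 0 v) := by
  set μ := gaussianReal 0 v
  have hneg : ∫ x, (1 / (1 + Real.exp (-(-x)))) ^ 2 ∂μ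
      = ∫ x, (1 / (1 + Real.exp (-x))) ^ 2 ∂μ := by
    rw [← integral_map measurable_neg.aemeasurable sig_cont.aestronglyMeasurable, gauss_neg]
  have hintneg : Integrable (fun x : ℝ => (1 / (1 + Real.exp (-(-x)))) ^ 2) μ := by
    have h1 : Integrable (fun x : ℝ => (1 / (1 + Real.exp (-x))) ^ 2)
        ((gaussianReal 0 v).map (fun x : ℝ => -x)) := by
      rw [gauss_neg]; exact sig_int v
    have := h1.comp_measurable measurable_neg
    simpa only [Function.comp_def] using this
  have hsum : (1 / 2 : ℝ) ≤ ∫ x, ((1 / (1 + Real.exp (-x))) ^ 2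
      + (1 / (1 + Real.exp (-(-x)))) ^ 2) ∂μ := by
    have : ∫ _ : ℝ, (1 / 2 : ℝ) ∂μ = 1 / 2 := by simp
    rw [← this]
    refine integral_mono (integrable_const _) ((sig_int v).add hintneg) (fun x => ?_)
    have ha := Real.exp_pos x
    have hb := Real.exp_pos (-x)
    have hab : Real.exp (-x) * Real.exp x = 1 := by
      rw [← Real.exp_add]; simp
    have hs : 1 / (1 + Real.exp (-x)) + 1 / (1 + Real.exp (-(-x))) = 1 := by
      rw [neg_neg]
      field_simp
      nlinarith
    nlinarith [sq_nonneg (1 / (1 + Real.exp (-x)) - 1 / (1 + Real.exp (-(-x))))]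
  rw [integral_add (sig_int v) hintneg, hneg] at hsum
  linarith

/-- paper's Lemma B.1: for the logistic sigmoid `σ`, the NTK diagonal
recursion `q_{ℓ+1} = E[σ(x)²]`, `d_{ℓ+1} = E[σ′(x)²]` (expectations under `N(0, q_ℓ)`),
`Θ₁ = q₁`, `Θ_{ℓ+1} = Θ_ℓ·d_{ℓ+1} + q_{ℓ+1}`, satisfies `Θ_L ≥ 1/4` for every `L ≥ 2`. -/
theorem ntk_diagonal_lower_bound (q : ℕ → NNReal) (d Θ : ℕ → ℝ)
    (hq : ∀ ℓ, 1 ≤ ℓ →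
      (q (ℓ + 1) : ℝ) = ∫ x, (1 / (1 + Real.exp (-x))) ^ 2 ∂(gaussianReal 0 (q ℓ)))
    (hd : ∀ ℓ, 1 ≤ ℓ →
      d (ℓ + 1) = ∫ x, (deriv (fun y : ℝ => 1 / (1 + Real.exp (-y))) x) ^ 2
        ∂(gaussianReal 0 (q ℓ)))
    (hΘ₁ : Θ 1 = q 1)
    (hΘ : ∀ ℓ, 1 ≤ ℓ → Θ (ℓ + 1) = Θ ℓ * d (ℓ + 1) + q (ℓ + 1))
    (L : ℕ) (hL : 2 ≤ L) :
    (1 / 4 : ℝ) ≤ Θ L := by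
  have hd0 : ∀ ℓ, 1 ≤ ℓ → 0 ≤ d (ℓ + 1) := by
    intro ℓ hℓ
    rw [hd ℓ hℓ]
    exact integral_nonneg fun x => sq_nonneg _
  have hΘ0 : ∀ ℓ, 1 ≤ ℓ → 0 ≤ Θ ℓ := by
    intro ℓ hℓ
    induction ℓ with
    | zero => omega
    | succ n ih =>
      rcases Nat.lt_or_ge 1 (n + 1) with h | h
      · have hn : 1 ≤ n := by omega
        rw [hΘ n hn]
        have := hd0 n hn
        have := ih hn
        have := (q (n + 1)).coe_nonneg
        nlinarith
      · have : n = 0 := by omega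
        subst this
        rw [hΘ₁]; exact (q 1).coe_nonneg
  obtain ⟨m, rfl⟩ : ∃ m, L = m + 1 := ⟨L - 1, by omega⟩
  have hm : 1 ≤ m := by omega
  rw [hΘ m hm]
  have h1 : (1 / 4 : ℝ) ≤ q (m + 1) := by rw [hq m hm]; exact key (q m)
  have := mul_nonneg (hΘ0 m hm) (hd0 m hm)
  linarith
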